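/- Let α be a finite type, Δ the probability simplex over α, and f : ℝ^α → ℝ convex and continuously differentiable on a neighborhood of Δ, with a unique minimizer p* over Δ. Fix λ > 0 and an initial pmf p₀ in the relative interior of Δ, and define the KL-proximal iterates p_{t+1} = argmin_{p ∈ Δ} [ f(p) + λ KL(p ‖ p_t) ]. Then every iterate p_t lies in the relative interior of Δ, the descent inequality f(p_{t+1}) − f(p*) ≤ λ [ KL(p* ‖ p_t) − KL(p* ‖ p_{t+1}) − KL(p_{t+1} ‖ p_t) ] holds for every t, the sequence KL(p* ‖ p_t) is nonincreasing, f(p_t) → f(p*), and p_t → p*. -/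

import Mathlib

open Filter Topology

/-- The probability simplex over a finite type `α`. -/
def probSimplex (α : Type*) [Fintype α] : Set (α → ℝ) :=
  {p | (∀ x, 0 ≤ p x) ∧ ∑ x : α, p x = 1}

/-- Kullback–Leibler divergence between pmfs on a finite type
(with the convention `0 log 0 = 0`). -/
noncomputable def klDiv {α : Type*} [Fintype α] (p q : α → ℝ) : ℝ :=
  ∑ x : α, p x * Real.log (p x / q x)


lemma probSimplex_eq (α : Type*) [Fintype α] : probSimplex α = stdSimplex ℝ α := rfl

lemma klDiv_nonneg_of_mem {α : Type*} [Fintype α] {p q : α → ℝ}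
    (hp : p ∈ probSimplex α) (hq : q ∈ probSimplex α) (hqpos : ∀ x, 0 < q x) :
    0 ≤ klDiv p q := by
  have key : ∀ x : α, p x - q x ≤ p x * Real.log (p x / q x) := by
    intro x
    rcases eq_or_lt_of_le (hp.1 x) with h | h
    · rw [← h]; simpa using (hqpos x).le
    · have hq' := hqpos x
      have hl := Real.log_le_sub_one_of_pos (div_pos hq' h)
      have hinv : Real.log (p x / q x) = - Real.log (q x / p x) := by
        rw [← Real.log_inv, inv_div]
      have hmul : p x * (q x / p x) = q x := by field_simp
      rw [hinv]
      nlinarith [mul_le_mul_of_nonneg_left hl h.le]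
  have h1 : ∑ x : α, (p x - q x) ≤ ∑ x : α, p x * Real.log (p x / q x) :=
    Finset.sum_le_sum fun x _ => key x
  have h2 : ∑ x : α, (p x - q x) = 0 := by
    rw [Finset.sum_sub_distrib, hp.2, hq.2]; ring
  unfold klDiv; linarith

lemma klDiv_self_eq_zero {α : Type*} [Fintype α] {p : α → ℝ} (hp : ∀ x, 0 ≤ p x) :
    klDiv p p = 0 := by
  unfold klDiv
  apply Finset.sum_eq_zero
  intro x _
  rcases eq_or_lt_of_le (hp x) with h | h
  · rw [← h]; simp
  · rw [div_self h.ne', Real.log_one, mul_zero]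

lemma log_term_sub {y c m : ℝ} (hy : 0 < y) (hc : 0 < c) (hm : 0 < m) :
    y * Real.log (y / c) - y * Real.log (y / m) = y * Real.log (m / c) := by
  rw [Real.log_div hy.ne' hc.ne', Real.log_div hy.ne' hm.ne', Real.log_div hm.ne' hc.ne']
  ring

lemma kl_mix {α : Type*} [Fintype α] (a b c : α → ℝ) (s : ℝ)
    (ha : ∀ x, 0 ≤ a x) (hb : ∀ x, 0 ≤ b x) (hc : ∀ x, 0 < c x)
    (hs0 : 0 < s) (hs1 : s < 1) :
    klDiv (fun x => (1 - s) * a x + s * b x) c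
      = (1 - s) * klDiv a c + s * klDiv b c
        - ((1 - s) * klDiv a (fun x => (1 - s) * a x + s * b x)
            + s * klDiv b (fun x => (1 - s) * a x + s * b x)) := by
  have pt : ∀ x : α, ((1 - s) * a x + s * b x) * Real.log (((1 - s) * a x + s * b x) / c x)
      = (1 - s) * (a x * Real.log (a x / c x)) + s * (b x * Real.log (b x / c x))
        - ((1 - s) * (a x * Real.log (a x / ((1 - s) * a x + s * b x)))
            + s * (b x * Real.log (b x / ((1 - s) * a x + s * b x)))) := by
    intro x
    set m := (1 - s) * a x + s * b x with hm
    have hA : (1 - s) * (a x * Real.log (a x / c x)) - (1 - s) * (a x * Real.log (a x / m))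
        = (1 - s) * a x * Real.log (m / c x) := by
      rcases eq_or_lt_of_le (ha x) with h | h
      · rw [← h]; ring
      · have hmpos : 0 < m := by
          rw [hm]; nlinarith [mul_nonneg hs0.le (hb x)]
        rw [← mul_sub, log_term_sub h (hc x) hmpos]; ring
    have hB : s * (b x * Real.log (b x / c x)) - s * (b x * Real.log (b x / m))
        = s * b x * Real.log (m / c x) := by
      rcases eq_or_lt_of_le (hb x) with h | h
      · rw [← h]; ring
      · have hmpos : 0 < m := by
          rw [hm]; nlinarith [mul_nonneg (by linarith : (0:ℝ) ≤ 1 - s) (ha x)]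
        rw [← mul_sub, log_term_sub h (hc x) hmpos]; ring
    have hsplit : m * Real.log (m / c x)
        = (1 - s) * a x * Real.log (m / c x) + s * b x * Real.log (m / c x) := by
      rw [hm]; ring
    linarith [hA, hB, hsplit]
  unfold klDiv
  rw [Finset.sum_congr rfl (fun x _ => pt x)]
  rw [Finset.sum_sub_distrib, Finset.sum_add_distrib, Finset.sum_add_distrib,
      ← Finset.mul_sum, ← Finset.mul_sum, ← Finset.mul_sum, ← Finset.mul_sum]


set_option maxHeartbeats 1000000 in
lemma pos_of_argmin {α : Type*} [Fintype α]
    (f : (α → ℝ) → ℝ) (U : Set (α → ℝ)) (hΔU : probSimplex α ⊆ U)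
    (hconv : ConvexOn ℝ U f) (lam : ℝ) (hlam : 0 < lam)
    (c : α → ℝ) (hc : ∀ x, 0 < c x)
    (m : α → ℝ) (hm : m ∈ probSimplex α)
    (hopt : ∀ q ∈ probSimplex α, f m + lam * klDiv m c ≤ f q + lam * klDiv q c) :
    ∀ x, 0 < m x := by
  classical
  by_contra hcon
  push_neg at hcon
  obtain ⟨x0, hx0⟩ := hcon
  have hx0' : m x0 = 0 := le_antisymm hx0 (hm.1 x0)
  haveI hne : Nonempty α := ⟨x0⟩
  set n : ℝ := (Fintype.card α : ℝ) with hn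
  have hn1 : 1 ≤ n := by
    rw [hn]; exact_mod_cast Fintype.card_pos
  have hnpos : 0 < n := lt_of_lt_of_le one_pos hn1
  set u : α → ℝ := fun _ => n⁻¹ with hu
  have huΔ : u ∈ probSimplex α := by
    constructor
    · intro x; rw [hu]; positivity
    · rw [hu]; simp only [Finset.sum_const, Finset.card_univ, nsmul_eq_mul]
      rw [← hn]; field_simp
  set A : ℝ := f m + lam * klDiv m c with hA
  set B : ℝ := f u + lam * klDiv u c with hB
  set D : ℝ := (A - B - lam * Real.log n) * n / lam with hD
  set ε : ℝ := min (1/2) (Real.exp (D - 1)) with hε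
  have hε0 : 0 < ε := lt_min (by norm_num) (Real.exp_pos _)
  have hε1 : ε < 1 := lt_of_le_of_lt (min_le_left _ _) (by norm_num)
  have hεlog : Real.log ε < D := by
    have h1 : Real.log ε ≤ Real.log (Real.exp (D - 1)) :=
      Real.log_le_log hε0 (min_le_right _ _)
    rw [Real.log_exp] at h1; linarith
  set qe : α → ℝ := fun x => (1 - ε) * m x + ε * u x with hqe
  have hqeΔ : qe ∈ probSimplex α := by
    constructor
    · intro x
      exact add_nonneg (mul_nonneg (by linarith) (hm.1 x)) (mul_nonneg hε0.le (huΔ.1 x))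
    · rw [hqe]
      rw [Finset.sum_add_distrib, ← Finset.mul_sum, ← Finset.mul_sum, hm.2, huΔ.2]; ring
  have hqepos : ∀ x, 0 < qe x := by
    intro x
    have h1 := hm.1 x
    have h2 : 0 < u x := by rw [hu]; positivity
    rw [hqe]; dsimp only; nlinarith
  have hfconv : f qe ≤ (1 - ε) * f m + ε * f u := by
    have h := hconv.2 (hΔU hm) (hΔU huΔ) (by linarith : (0:ℝ) ≤ 1 - ε) hε0.le (by ring)
    have he : (1 - ε) • m + ε • u = qe := by
      funext x; rw [hqe]; simp [smul_eq_mul]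
    rw [he] at h
    simpa using h
  have hklid := kl_mix m u c ε hm.1 huΔ.1 hc hε0 hε1
  rw [← hqe] at hklid
  have hgibbs : 0 ≤ klDiv m qe := klDiv_nonneg_of_mem hm hqeΔ hqepos
  -- lower bound klDiv u qe
  have hKLu : -(Real.log n) - n⁻¹ * Real.log ε ≤ klDiv u qe := by
    have hterm0 : u x0 * Real.log (u x0 / qe x0) = n⁻¹ * (-(Real.log ε)) := by
      have hq0 : qe x0 = ε * n⁻¹ := by rw [hqe]; dsimp only; rw [hx0', hu]; ring
      have hdiv : u x0 / qe x0 = ε⁻¹ := by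
        rw [hq0, hu]; field_simp
      rw [hdiv, hu, Real.log_inv]
    have htermx : ∀ x ∈ Finset.univ.erase x0,
        n⁻¹ * Real.log n⁻¹ ≤ u x * Real.log (u x / qe x) := by
      intro x _
      have hqle1 : qe x ≤ 1 := by
        have hs := Finset.single_le_sum (f := qe) (fun i _ => hqeΔ.1 i) (Finset.mem_univ x)
        rw [hqeΔ.2] at hs
        exact hs
      have hupos : (0:ℝ) < n⁻¹ := by positivity
      have hux : u x = n⁻¹ := rfl
      have hlog : Real.log n⁻¹ ≤ Real.log (u x / qe x) := by
        apply Real.log_le_log hupos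
        rw [hux, le_div_iff₀ (hqepos x)]
        nlinarith [mul_nonneg hupos.le (sub_nonneg.mpr hqle1)]
      rw [hux]
      exact mul_le_mul_of_nonneg_left hlog hupos.le
    have hsum : klDiv u qe = u x0 * Real.log (u x0 / qe x0)
        + ∑ x ∈ Finset.univ.erase x0, u x * Real.log (u x / qe x) := by
      unfold klDiv
      rw [← Finset.add_sum_erase _ _ (Finset.mem_univ x0)]
    have hb : n⁻¹ * Real.log n⁻¹ ≤ 0 := by
      apply mul_nonpos_of_nonneg_of_nonpos (by positivity)
      rw [Real.log_inv]
      simp only [neg_nonpos]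
      exact Real.log_nonneg hn1
    have hcard : ((Finset.univ.erase x0).card : ℝ) ≤ n := by
      rw [hn]
      have := Finset.card_le_card (Finset.erase_subset x0 (Finset.univ : Finset α))
      rw [Finset.card_univ] at this
      exact_mod_cast this
    have h1 : ((Finset.univ.erase x0).card : ℝ) * (n⁻¹ * Real.log n⁻¹)
        ≤ ∑ x ∈ Finset.univ.erase x0, u x * Real.log (u x / qe x) := by
      have := Finset.card_nsmul_le_sum (Finset.univ.erase x0) _ _ htermx
      simpa [nsmul_eq_mul] using this
    have h2 : n * (n⁻¹ * Real.log n⁻¹) ≤ ((Finset.univ.erase x0).card : ℝ) * (n⁻¹ * Real.log n⁻¹) :=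
      mul_le_mul_of_nonpos_right hcard hb
    have h3 : n * (n⁻¹ * Real.log n⁻¹) = -(Real.log n) := by
      rw [Real.log_inv]; field_simp
    rw [hsum, hterm0]
    nlinarith [h1, h2, h3]
  -- combine
  have hmain := hopt qe hqeΔ
  rw [hklid] at hmain
  have hshape : ε * (f m + lam * klDiv m c + lam * klDiv u qe) ≤ ε * (f u + lam * klDiv u c) := by
    nlinarith [mul_nonneg (mul_nonneg hlam.le (by linarith : (0:ℝ) ≤ 1 - ε)) hgibbs]
  have hX : f m + lam * klDiv m c + lam * klDiv u qe ≤ f u + lam * klDiv u c :=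
    (mul_le_mul_iff_right₀ hε0).mp hshape
  have h4 : lam * (-(Real.log n) - n⁻¹ * Real.log ε) ≤ lam * klDiv u qe :=
    mul_le_mul_of_nonneg_left hKLu hlam.le
  have h5 : lam * n⁻¹ * Real.log ε < lam * n⁻¹ * D := by
    apply mul_lt_mul_of_pos_left hεlog (by positivity)
  have hD' : lam * n⁻¹ * D = A - B - lam * Real.log n := by
    rw [hD]; field_simp
  rw [hA, hB] at hD'
  nlinarith [hX, h4, h5, hD']

set_option maxHeartbeats 1000000 in
lemma three_point {α : Type*} [Fintype α]
    (f : (α → ℝ) → ℝ) (U : Set (α → ℝ)) (hΔU : probSimplex α ⊆ U)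
    (hconv : ConvexOn ℝ U f) (lam : ℝ) (hlam : 0 < lam)
    (c : α → ℝ) (hc : ∀ x, 0 < c x)
    (m : α → ℝ) (hm : m ∈ probSimplex α) (hmpos : ∀ x, 0 < m x)
    (hopt : ∀ q ∈ probSimplex α, f m + lam * klDiv m c ≤ f q + lam * klDiv q c)
    (q : α → ℝ) (hq : q ∈ probSimplex α) :
    f m - f q ≤ lam * (klDiv q c - klDiv q m - klDiv m c) := by
  set R : ℝ := f q + lam * klDiv q c - f m - lam * klDiv m c with hR
  have key : ∀ s ∈ Set.Ioo (0:ℝ) 1,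
      lam * klDiv q (fun x => (1 - s) * m x + s * q x) ≤ R := by
    intro s hs
    obtain ⟨hs0, hs1⟩ := hs
    set qs : α → ℝ := fun x => (1 - s) * m x + s * q x with hqs
    have hqsΔ : qs ∈ probSimplex α := by
      constructor
      · intro x
        exact add_nonneg (mul_nonneg (by linarith) (hm.1 x)) (mul_nonneg hs0.le (hq.1 x))
      · rw [hqs]
        rw [Finset.sum_add_distrib, ← Finset.mul_sum, ← Finset.mul_sum, hm.2, hq.2]; ring
    have hqspos : ∀ x, 0 < qs x := by
      intro x
      have h1 := hmpos x
      have h2 := hq.1 x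
      rw [hqs]; dsimp only; nlinarith
    have hfc : f qs ≤ (1 - s) * f m + s * f q := by
      have h := hconv.2 (hΔU hm) (hΔU hq) (by linarith : (0:ℝ) ≤ 1 - s) hs0.le (by ring)
      have he : (1 - s) • m + s • q = qs := by
        funext x; rw [hqs]; simp [smul_eq_mul]
      rw [he] at h
      simpa using h
    have hid := kl_mix m q c s hm.1 hq.1 hc hs0 hs1
    rw [← hqs] at hid
    have hgm : 0 ≤ klDiv m qs := klDiv_nonneg_of_mem hm hqsΔ hqspos
    have hmain := hopt qs hqsΔ
    rw [hid] at hmain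
    have hshape : s * (lam * klDiv q qs) ≤ s * R := by
      rw [hR]
      nlinarith [mul_nonneg (mul_nonneg hlam.le (by linarith : (0:ℝ) ≤ 1 - s)) hgm]
    exact (mul_le_mul_iff_right₀ hs0).mp hshape
  have hterm : ∀ x : α, Tendsto (fun s : ℝ => q x * Real.log (q x / ((1 - s) * m x + s * q x)))
      (𝓝 0) (𝓝 (q x * Real.log (q x / m x))) := by
    intro x
    rcases eq_or_lt_of_le (hq.1 x) with h | h
    · simp only [← h, zero_mul]
      exact tendsto_const_nhds
    · have hd : ContinuousAt (fun s : ℝ => (1 - s) * m x + s * q x) 0 := by fun_prop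
      have hd0 : (1 - (0:ℝ)) * m x + 0 * q x ≠ 0 := by
        have := hmpos x; simp; linarith
      have hdiv : ContinuousAt (fun s : ℝ => q x / ((1 - s) * m x + s * q x)) 0 :=
        continuousAt_const.div hd hd0
      have hne : q x / ((1 - (0:ℝ)) * m x + 0 * q x) ≠ 0 := by
        have := hmpos x; simp; constructor <;> [exact h.ne'; linarith]
      have hc2 : ContinuousAt (fun s : ℝ => q x * Real.log (q x / ((1 - s) * m x + s * q x))) 0 :=
        continuousAt_const.mul (hdiv.log hne)
      have heval : q x * Real.log (q x / ((1 - (0:ℝ)) * m x + 0 * q x))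
          = q x * Real.log (q x / m x) := by norm_num
      have h3 := hc2.tendsto
      rw [heval] at h3
      exact h3
  have hcont : Tendsto (fun s : ℝ => lam * klDiv q (fun x => (1 - s) * m x + s * q x))
      (𝓝[>] (0:ℝ)) (𝓝 (lam * klDiv q m)) := by
    apply Tendsto.mono_left _ nhdsWithin_le_nhds
    apply Tendsto.const_mul
    have h := tendsto_finset_sum (Finset.univ : Finset α) (fun x _ => hterm x)
    exact h
  have hev : ∀ᶠ s in 𝓝[>] (0:ℝ),
      lam * klDiv q (fun x => (1 - s) * m x + s * q x) ≤ R :=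
    Filter.eventually_of_mem (Ioo_mem_nhdsGT_of_mem (by norm_num : (0:ℝ) ∈ Set.Ico (0:ℝ) 1)) key
  have hlim : lam * klDiv q m ≤ R := le_of_tendsto hcont hev
  rw [hR] at hlim
  have hexp : lam * (klDiv q c - klDiv q m - klDiv m c)
      = lam * klDiv q c - lam * klDiv q m - lam * klDiv m c := by ring
  linarith [hlim, hexp.ge, hexp.le]

set_option maxHeartbeats 1000000 in
/-- **Convergence of KL-proximal (entropy-regularized, mirror-descent) iterates.**
For a convex, continuously differentiable objective `f` on a neighborhood of the
simplex with unique minimizer `p*`, the iterates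
`p_{t+1} = argmin_{p ∈ Δ} [f(p) + λ KL(p‖p_t)]` starting from a strictly positive pmf
stay strictly positive, satisfy the three-point descent inequality, make `KL(p*‖p_t)`
nonincreasing, and converge with `f(p_t) → f(p*)` and `p_t → p*`. -/
theorem kl_proximal_convergence {α : Type*} [Fintype α]
    (f : (α → ℝ) → ℝ) (U : Set (α → ℝ)) (hUopen : IsOpen U)
    (hΔU : probSimplex α ⊆ U)
    (hconv : ConvexOn ℝ U f) (hdiff : ContDiffOn ℝ 1 f U)
    (pstar : α → ℝ) (hpstar : pstar ∈ probSimplex α)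
    (hmin : ∀ q ∈ probSimplex α, f pstar ≤ f q)
    (huniq : ∀ q ∈ probSimplex α, (∀ r ∈ probSimplex α, f q ≤ f r) → q = pstar)
    (lam : ℝ) (hlam : 0 < lam)
    (p : ℕ → α → ℝ) (hp0 : p 0 ∈ probSimplex α) (hp0pos : ∀ x, 0 < p 0 x)
    (hiter : ∀ t, p (t + 1) ∈ probSimplex α ∧
      ∀ q ∈ probSimplex α,
        f (p (t + 1)) + lam * klDiv (p (t + 1)) (p t)
          ≤ f q + lam * klDiv q (p t)) :
    (∀ t x, 0 < p t x) ∧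
    (∀ t, f (p (t + 1)) - f pstar ≤
      lam * (klDiv pstar (p t) - klDiv pstar (p (t + 1)) - klDiv (p (t + 1)) (p t))) ∧
    (∀ s t, s ≤ t → klDiv pstar (p t) ≤ klDiv pstar (p s)) ∧
    Tendsto (fun t => f (p t)) atTop (𝓝 (f pstar)) ∧
    Tendsto p atTop (𝓝 pstar) := by
  have hmem : ∀ t, p t ∈ probSimplex α := by
    intro t
    induction t with
    | zero => exact hp0
    | succ t _ => exact (hiter t).1
  have hpos : ∀ t x, 0 < p t x := by
    intro t
    induction t with
    | zero => exact hp0pos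
    | succ t ih =>
      exact pos_of_argmin f U hΔU hconv lam hlam (p t) ih (p (t + 1)) (hmem (t + 1)) (hiter t).2
  have hineq : ∀ t, f (p (t + 1)) - f pstar ≤
      lam * (klDiv pstar (p t) - klDiv pstar (p (t + 1)) - klDiv (p (t + 1)) (p t)) := by
    intro t
    exact three_point f U hΔU hconv lam hlam (p t) (hpos t) (p (t + 1)) (hmem (t + 1))
      (hpos (t + 1)) (hiter t).2 pstar hpstar
  have hKLpos : ∀ t, 0 ≤ klDiv pstar (p t) :=
    fun t => klDiv_nonneg_of_mem hpstar (hmem t) (hpos t)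
  have hKLstep_pos : ∀ t, 0 ≤ klDiv (p (t + 1)) (p t) :=
    fun t => klDiv_nonneg_of_mem (hmem (t + 1)) (hmem t) (hpos t)
  have hmono1 : ∀ t, klDiv pstar (p (t + 1)) ≤ klDiv pstar (p t) := by
    intro t
    have h1 := hineq t
    have h2 : 0 ≤ f (p (t + 1)) - f pstar := by linarith [hmin (p (t + 1)) (hmem (t + 1))]
    have h3 : 0 ≤ lam * (klDiv pstar (p t) - klDiv pstar (p (t + 1)) - klDiv (p (t + 1)) (p t)) :=
      le_trans h2 h1
    have h4 : (0:ℝ) ≤ klDiv pstar (p t) - klDiv pstar (p (t + 1)) - klDiv (p (t + 1)) (p t) :=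
      le_of_mul_le_mul_left (by rw [mul_zero]; exact h3) hlam
    linarith [h4, hKLstep_pos t]
  have hanti : Antitone (fun t => klDiv pstar (p t)) := antitone_nat_of_succ_le hmono1
  have hmono : ∀ s t, s ≤ t → klDiv pstar (p t) ≤ klDiv pstar (p s) :=
    fun s t hst => hanti hst
  -- f is nonincreasing along iterates
  have hfdec : ∀ t, f (p (t + 1)) ≤ f (p t) := by
    intro t
    have h := (hiter t).2 (p t) (hmem t)
    rw [klDiv_self_eq_zero (fun x => (hmem t).1 x)] at h
    have h2 := hKLstep_pos t
    nlinarith [mul_nonneg hlam.le h2]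
  have hfanti : Antitone (fun t => f (p t)) := antitone_nat_of_succ_le hfdec
  have hfge : ∀ t, f pstar ≤ f (p t) := fun t => hmin _ (hmem t)
  -- telescoping bound
  have htel : ∀ n : ℕ, (n : ℝ) * (f (p n) - f pstar) ≤ lam * klDiv pstar (p 0) := by
    intro n
    have hsum : ∑ t ∈ Finset.range n, (f (p (t + 1)) - f pstar)
        ≤ lam * (klDiv pstar (p 0) - klDiv pstar (p n)) := by
      induction n with
      | zero => simp
      | succ n ih =>
        rw [Finset.sum_range_succ]
        have h := hineq n
        have hs := hKLstep_pos n
        nlinarith [mul_nonneg hlam.le hs]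
    have hlow : ∀ t ∈ Finset.range n, f (p n) - f pstar ≤ f (p (t + 1)) - f pstar := by
      intro t ht
      have : f (p n) ≤ f (p (t + 1)) := hfanti (Nat.succ_le_of_lt (Finset.mem_range.mp ht))
      linarith
    have hcard := Finset.card_nsmul_le_sum (Finset.range n) _ _ hlow
    rw [Finset.card_range, nsmul_eq_mul] at hcard
    have hKn := hKLpos n
    nlinarith [mul_nonneg hlam.le hKn]
  -- f tendsto
  have hatend : Tendsto (fun t : ℕ => f (p t) - f pstar) atTop (𝓝 0) := by
    have h0 : Tendsto (fun n : ℕ => lam * klDiv pstar (p 0) / (n : ℝ)) atTop (𝓝 0) :=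
      tendsto_const_div_atTop_nhds_zero_nat _
    apply squeeze_zero' (g := fun n : ℕ => lam * klDiv pstar (p 0) / (n : ℝ))
    · exact Filter.Eventually.of_forall fun t => by linarith [hfge t]
    · filter_upwards [Filter.eventually_ge_atTop 1] with t ht
      have htpos : (0:ℝ) < (t : ℝ) := by exact_mod_cast ht
      rw [le_div_iff₀ htpos]
      have := htel t
      linarith [this]
    · exact h0
  have hftend : Tendsto (fun t => f (p t)) atTop (𝓝 (f pstar)) := by
    have h := hatend.add_const (f pstar)
    simpa using h
  -- p tendsto
  have hcompact : IsCompact (probSimplex α) := by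
    rw [probSimplex_eq]; exact isCompact_stdSimplex ℝ α
  have hfcont : ∀ q ∈ probSimplex α, ContinuousAt f q := fun q hq =>
    hdiff.continuousOn.continuousAt (hUopen.mem_nhds (hΔU hq))
  have hptend : Tendsto p atTop (𝓝 pstar) := by
    apply tendsto_of_subseq_tendsto
    intro ns hns
    obtain ⟨q, hqΔ, φ, hφ, hφtend⟩ := hcompact.tendsto_subseq (fun n => hmem (ns n))
    refine ⟨φ, ?_⟩
    have h1 : Tendsto (fun n => f (p (ns (φ n)))) atTop (𝓝 (f q)) :=
      ((hfcont q hqΔ).tendsto).comp hφtend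
    have h2 : Tendsto (fun n => f (p (ns (φ n)))) atTop (𝓝 (f pstar)) :=
      hftend.comp (hns.comp hφ.tendsto_atTop)
    have hfq : f q = f pstar := tendsto_nhds_unique h1 h2
    have hqeq : q = pstar := huniq q hqΔ (fun r hr => hfq ▸ hmin r hr)
    rw [hqeq] at hφtend
    exact hφtend
  exact ⟨hpos, hineq, hmono, hftend, hptend⟩
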